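/- Let P and Q be probability measures on a measurable space. Then (i) there exists a measurable set C that is a co-support of (P,Q); (ii) the infimum of Q(A) over all measurable sets A with P(Aᶜ) = 0 is attained; and (iii) for every co-support C of (P,Q), Q(C) equals this infimum, i.e. Q(C) = inf{ Q(A) : A measurable, P(Aᶜ) = 0 }. -/

import Mathlib

open MeasureTheory

/-- Splitting lemma: a `(P ⊓ Q)`-null measurable set is covered by a `P`-null set
and a `Q`-null set. -/
lemma split_inf_null {α : Type*} [MeasurableSpace α] (P Q : Measure α)
    [SigmaFinite P] [SigmaFinite Q] (N : Set α) (hN : MeasurableSet N)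
    (h0 : (P ⊓ Q) N = 0) :
    ∃ N₁ N₂ : Set α, MeasurableSet N₁ ∧ MeasurableSet N₂ ∧ N ⊆ N₁ ∪ N₂ ∧
      P N₁ = 0 ∧ Q N₂ = 0 := by
  set μ := P + Q with hμ
  set f := P.rnDeriv μ with hf
  set g := Q.rnDeriv μ with hg
  have hmf : Measurable f := Measure.measurable_rnDeriv P μ
  have hmg : Measurable g := Measure.measurable_rnDeriv Q μ
  have hle : μ.withDensity (fun x => min (f x) (g x)) ≤ P ⊓ Q := by
    refine le_inf ?_ ?_
    · exact (withDensity_mono (Filter.Eventually.of_forall fun x => min_le_left _ _)).trans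
        (Measure.withDensity_rnDeriv_le P μ)
    · exact (withDensity_mono (Filter.Eventually.of_forall fun x => min_le_right _ _)).trans
        (Measure.withDensity_rnDeriv_le Q μ)
  have h1 : μ.withDensity (fun x => min (f x) (g x)) N = 0 :=
    le_antisymm (h0 ▸ hle N) (zero_le)
  rw [withDensity_apply _ hN] at h1
  have hmin : ∀ᵐ x ∂(μ.restrict N), min (f x) (g x) = 0 := by
    rwa [lintegral_eq_zero_iff (hmf.min hmg)] at h1
  set E := {x | f x ≤ g x} with hE_def
  have hE : MeasurableSet E := measurableSet_le hmf hmg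
  have hPle : P ≤ μ := Measure.le_add_right le_rfl
  have hQle : Q ≤ μ := Measure.le_add_left le_rfl
  refine ⟨N ∩ E, N \ E, hN.inter hE, hN.diff hE, ?_, ?_, ?_⟩
  · intro x hx
    by_cases h : x ∈ E
    · exact Or.inl ⟨hx, h⟩
    · exact Or.inr ⟨hx, h⟩
  · have hP : P (N ∩ E) = ∫⁻ x in N ∩ E, f x ∂μ := by
      conv_lhs => rw [← Measure.withDensity_rnDeriv_eq P μ hPle.absolutelyContinuous]
      rw [withDensity_apply _ (hN.inter hE)]
    rw [hP]
    have hz : ∀ᵐ x ∂(μ.restrict (N ∩ E)), f x = 0 := by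
      have h' := ae_restrict_of_ae_restrict_of_subset (Set.inter_subset_left (s := N) (t := E)) hmin
      filter_upwards [h', ae_restrict_mem (hN.inter hE)] with x h1 h2
      rw [min_eq_left h2.2] at h1
      exact h1
    calc ∫⁻ x in N ∩ E, f x ∂μ = ∫⁻ _ in N ∩ E, 0 ∂μ := lintegral_congr_ae hz
    _ = 0 := lintegral_zero
  · have hQ : Q (N \ E) = ∫⁻ x in N \ E, g x ∂μ := by
      conv_lhs => rw [← Measure.withDensity_rnDeriv_eq Q μ hQle.absolutelyContinuous]
      rw [withDensity_apply _ (hN.diff hE)]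
    rw [hQ]
    have hz : ∀ᵐ x ∂(μ.restrict (N \ E)), g x = 0 := by
      have h' := ae_restrict_of_ae_restrict_of_subset (Set.diff_subset (s := N) (t := E)) hmin
      filter_upwards [h', ae_restrict_mem (hN.diff hE)] with x h1 h2
      have : g x ≤ f x := le_of_not_ge h2.2
      rw [min_eq_right this] at h1
      exact h1
    calc ∫⁻ x in N \ E, g x ∂μ = ∫⁻ _ in N \ E, 0 ∂μ := lintegral_congr_ae hz
    _ = 0 := lintegral_zero

/-- A measurable set `A` is a *co-support* of the pair `(P, Q)` if `(P ⊓ Q)(Aᶜ) = 0`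
(where `P ⊓ Q` is the lattice infimum of the two measures) and for every measurable
subset `B ⊆ A`, `P(B) = 0 ↔ Q(B) = 0`. -/
def IsCosupport {α : Type*} [MeasurableSpace α] (P Q : Measure α) (A : Set α) : Prop :=
  MeasurableSet A ∧ (P ⊓ Q) Aᶜ = 0 ∧
    ∀ B : Set α, B ⊆ A → MeasurableSet B → (P B = 0 ↔ Q B = 0)

theorem cosupport_exists_and_realizes_extreme_precision
    {α : Type*} [MeasurableSpace α] (P Q : Measure α)
    [IsProbabilityMeasure P] [IsProbabilityMeasure Q] :
    (∃ C : Set α, IsCosupport P Q C) ∧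
    (∃ A : Set α, MeasurableSet A ∧ P Aᶜ = 0 ∧
        Q A = ⨅ (A' : Set α) (_ : MeasurableSet A') (_ : P A'ᶜ = 0), Q A') ∧
    (∀ C : Set α, IsCosupport P Q C →
        Q C = ⨅ (A : Set α) (_ : MeasurableSet A) (_ : P Aᶜ = 0), Q A) := by
  -- absolutely continuous parts
  set ac := P.withDensity (Q.rnDeriv P) with hac_def
  set acP := Q.withDensity (P.rnDeriv Q) with hacP_def
  have hac_le : ac ≤ Q := Measure.withDensity_rnDeriv_le Q P
  have hacP_le : acP ≤ P := Measure.withDensity_rnDeriv_le P Q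
  have hac_ac : ac ≪ P := withDensity_absolutelyContinuous P _
  have hacP_ac : acP ≪ Q := withDensity_absolutelyContinuous Q _
  have hQdec : Q.singularPart P + ac = Q := Measure.singularPart_add_rnDeriv Q P
  have hPdec : P.singularPart Q + acP = P := Measure.singularPart_add_rnDeriv P Q
  obtain ⟨S, hSm, hSsing, hSc⟩ := Measure.mutuallySingular_singularPart Q P
  obtain ⟨T, hTm, hTsing, hTc⟩ := Measure.mutuallySingular_singularPart P Q
  -- lower bound: any measurable support A of P has Q A ≥ ac univ
  have hlow : ∀ A : Set α, MeasurableSet A → P Aᶜ = 0 → ac Set.univ ≤ Q A := by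
    intro A hA hAc
    have h1 : ac Aᶜ = 0 := hac_ac hAc
    have h2 : ac Set.univ ≤ ac A + ac Aᶜ := by
      rw [← Set.union_compl_self A]; exact measure_union_le _ _
    rw [h1, add_zero] at h2
    exact h2.trans (hac_le A)
  -- Q S = ac univ
  have hQS : Q S = ac Set.univ := by
    have h1 : Q S = Q.singularPart P S + ac S := by
      conv_lhs => rw [← hQdec]
      exact Measure.add_apply _ _ _
    have h2 : ac S ≤ ac Set.univ := measure_mono (Set.subset_univ _)
    rw [hSsing, zero_add] at h1
    exact le_antisymm (h1 ▸ h2) (hlow S hSm hSc)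
  -- the infimum equals ac univ
  have hinf : (⨅ (A : Set α) (_ : MeasurableSet A) (_ : P Aᶜ = 0), Q A) = ac Set.univ := by
    refine le_antisymm ?_ ?_
    · calc (⨅ (A : Set α) (_ : MeasurableSet A) (_ : P Aᶜ = 0), Q A) ≤ Q S := by
            exact iInf₂_le_of_le S hSm (iInf_le _ hSc)
      _ = ac Set.univ := hQS
    · exact le_iInf₂ fun A hA => le_iInf fun hAc => hlow A hA hAc
  -- the co-support C = S ∩ T
  set C := S ∩ T with hC_def
  have hCm : MeasurableSet C := hSm.inter hTm
  have hCcos : IsCosupport P Q C := by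
    refine ⟨hCm, ?_, ?_⟩
    · have h1 : (P ⊓ Q) Sᶜ = 0 :=
        le_antisymm (le_trans (inf_le_left (b := Q) (a := P) Sᶜ) hSc.le) (zero_le)
      have h2 : (P ⊓ Q) Tᶜ = 0 :=
        le_antisymm (le_trans (inf_le_right (b := Q) (a := P) Tᶜ) hTc.le) (zero_le)
      have : (P ⊓ Q) Cᶜ ≤ (P ⊓ Q) Sᶜ + (P ⊓ Q) Tᶜ := by
        rw [hC_def, Set.compl_inter]; exact measure_union_le _ _
      rw [h1, h2, add_zero] at this
      exact le_antisymm this (zero_le)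
    · intro B hB hBm
      constructor
      · intro hPB
        have h1 : ac B = 0 := hac_ac hPB
        have h2 : Q.singularPart P B = 0 :=
          le_antisymm (le_trans (measure_mono (hB.trans Set.inter_subset_left)) hSsing.le)
            (zero_le)
        have : Q B = Q.singularPart P B + ac B := by
          conv_lhs => rw [← hQdec]
          exact Measure.add_apply _ _ _
        rw [this, h1, h2, add_zero]
      · intro hQB
        have h1 : acP B = 0 := hacP_ac hQB
        have h2 : P.singularPart Q B = 0 :=
          le_antisymm (le_trans (measure_mono (hB.trans Set.inter_subset_right)) hTsing.le)
            (zero_le)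
        have : P B = P.singularPart Q B + acP B := by
          conv_lhs => rw [← hPdec]
          exact Measure.add_apply _ _ _
        rw [this, h1, h2, add_zero]
  -- part (iii)
  have hthree : ∀ C' : Set α, IsCosupport P Q C' →
      Q C' = ⨅ (A : Set α) (_ : MeasurableSet A) (_ : P Aᶜ = 0), Q A := by
    intro C' ⟨hC'm, hC'null, hC'iff⟩
    refine le_antisymm ?_ ?_
    · refine le_iInf₂ fun A hA => le_iInf fun hAc => ?_
      have hdiff : Q (C' \ A) = 0 := by
        refine (hC'iff (C' \ A) Set.diff_subset (hC'm.diff hA)).1 ?_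
        exact le_antisymm (le_trans (measure_mono fun x hx => hx.2) hAc.le) (zero_le)
      calc Q C' ≤ Q (C' ∩ A) + Q (C' \ A) := by
            rw [← measure_inter_add_diff C' hA]
      _ = Q (C' ∩ A) := by rw [hdiff, add_zero]
      _ ≤ Q A := measure_mono Set.inter_subset_right
    · rw [hinf]
      obtain ⟨N₁, N₂, hN₁m, hN₂m, hcover, hPN₁, hQN₂⟩ :=
        split_inf_null P Q C'ᶜ hC'm.compl hC'null
      have hacN : ac C'ᶜ = 0 := by
        have h1 : ac N₁ = 0 := hac_ac hPN₁
        have h2 : ac N₂ = 0 := le_antisymm ((hac_le N₂).trans hQN₂.le) (zero_le)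
        have : ac C'ᶜ ≤ ac N₁ + ac N₂ := (measure_mono hcover).trans (measure_union_le _ _)
        rw [h1, h2, add_zero] at this
        exact le_antisymm this (zero_le)
      have : ac Set.univ ≤ ac C' + ac C'ᶜ := by
        rw [← Set.union_compl_self C']; exact measure_union_le _ _
      rw [hacN, add_zero] at this
      exact this.trans (hac_le C')
  exact ⟨⟨C, hCcos⟩, ⟨S, hSm, hSc, hQS.trans hinf.symm⟩, hthree⟩
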